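/- Assume infinitely many orthonormal polynomials p_n^μ exist (i.e. rank M̃_k(μ) → ∞ as k → ∞). If z_1, ..., z_ℓ ∈ 𝒮(μ) are distinct, then there exists N such that for all n ≥ N the ℓ×ℓ matrix K_n^μ(z_1,...,z_ℓ; z_1,...,z_ℓ) = (K_n^μ(z_j, z_k))_{j,k=1}^{ℓ} is invertible. -/
import Mathlib


open MeasureTheory Matrix Finset

namespace CD

variable {d : ℕ}

/-- The `L²(μ)` inner product of two polynomial functions. -/
noncomputable def inner2 (μ : Measure (Fin d → ℂ)) (f g : MvPolynomial (Fin d) ℂ) : ℂ :=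
  ∫ z, MvPolynomial.eval z f * (starRingEnd ℂ) (MvPolynomial.eval z g) ∂μ

/-- The moment matrix `M̃_k(μ)` for an enumeration `α` of multi-indices. -/
noncomputable def momentMatrix (μ : Measure (Fin d → ℂ)) (α : ℕ → (Fin d →₀ ℕ)) (k : ℕ) :
    Matrix (Fin (k + 1)) (Fin (k + 1)) ℂ :=
  Matrix.of fun j ℓ =>
    inner2 μ (MvPolynomial.monomial (α (ℓ : ℕ)) 1) (MvPolynomial.monomial (α (j : ℕ)) 1)

/-- `k_n^μ = min {k : rank M̃_k(μ) = n+1}`. -/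
noncomputable def kdeg (μ : Measure (Fin d → ℂ)) (α : ℕ → (Fin d →₀ ℕ)) (n : ℕ) : ℕ :=
  sInf {k | (momentMatrix μ α k).rank = n + 1}

/-- `deg p ≤ k` with respect to the enumeration `α`. -/
def DegLE (α : ℕ → (Fin d →₀ ℕ)) (p : MvPolynomial (Fin d) ℂ) (k : ℕ) : Prop :=
  ∀ m : ℕ, MvPolynomial.coeff (α m) p ≠ 0 → m ≤ k

/-- `deg p = k` with respect to the enumeration `α`. -/
def DegEq (α : ℕ → (Fin d →₀ ℕ)) (p : MvPolynomial (Fin d) ℂ) (k : ℕ) : Prop :=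
  DegLE α p k ∧ MvPolynomial.coeff (α k) p ≠ 0

/-- An admissible enumeration of all multi-indices: a bijection starting at `0` such that
multiplication by any variable increases the index. -/
def AdmissibleEnum (α : ℕ → (Fin d →₀ ℕ)) : Prop :=
  Function.Bijective α ∧ α 0 = 0 ∧
    ∀ (j : Fin d) (n : ℕ), ∃ k : ℕ, n < k ∧ α k = α n + Finsupp.single j 1

/-- The Christoffel–Darboux kernel `K_n(z,w) = ∑_{j≤n} p_j(z) conj (p_j(w))`. -/
noncomputable def CDkernel (p : ℕ → MvPolynomial (Fin d) ℂ) (n : ℕ) (z w : Fin d → ℂ) : ℂ :=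
  ∑ j ∈ Finset.range (n + 1),
    MvPolynomial.eval z (p j) * (starRingEnd ℂ) (MvPolynomial.eval w (p j))

/-- `p_0, …, p_n` is the Gram–Schmidt orthonormal family in `L²(μ)`:
orthonormal, with `p_m` a linear combination of the monomials `z^{α(k_0)},…,z^{α(k_m)}`
with positive (real) leading coefficient. -/
def IsONBasisUpTo (μ : Measure (Fin d → ℂ)) (α : ℕ → (Fin d →₀ ℕ))
    (p : ℕ → MvPolynomial (Fin d) ℂ) (n : ℕ) : Prop :=
  (∀ i ≤ n, ∀ j ≤ n, inner2 μ (p i) (p j) = if i = j then 1 else 0) ∧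
  (∀ m ≤ n, ∃ c : Fin (m + 1) → ℂ, 0 < (c (Fin.last m)).re ∧ (c (Fin.last m)).im = 0 ∧
      p m = ∑ i : Fin (m + 1), MvPolynomial.monomial (α (kdeg μ α (i : ℕ))) (c i))

/-- The full Gram–Schmidt orthonormal sequence of `μ`. -/
def IsONBasis (μ : Measure (Fin d → ℂ)) (α : ℕ → (Fin d →₀ ℕ))
    (p : ℕ → MvPolynomial (Fin d) ℂ) : Prop :=
  ∀ n, IsONBasisUpTo μ α p n

/-- The (closed) support of a measure. -/
def msupport {X : Type*} [TopologicalSpace X] [MeasurableSpace X] (μ : Measure X) : Set X :=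
  {x | ∀ U : Set X, x ∈ U → IsOpen U → μ U ≠ 0}

/-- `𝒩(μ)`: the ideal of polynomials vanishing on `supp(μ)`. -/
def Nideal (μ : Measure (Fin d → ℂ)) : Set (MvPolynomial (Fin d) ℂ) :=
  {q | ∀ z ∈ msupport μ, MvPolynomial.eval z q = 0}

/-- `𝒩_n(μ) = {p ∈ 𝒩(μ) : deg p ≤ k_n^μ}`. -/
def NidealLE (μ : Measure (Fin d → ℂ)) (α : ℕ → (Fin d →₀ ℕ)) (n : ℕ) :
    Set (MvPolynomial (Fin d) ℂ) :=
  {q | q ∈ Nideal μ ∧ DegLE α q (kdeg μ α n)}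

/-- `𝒮_n(μ)`: the common zero set of `𝒩_n(μ)`. -/
def Svariety (μ : Measure (Fin d → ℂ)) (α : ℕ → (Fin d →₀ ℕ)) (n : ℕ) : Set (Fin d → ℂ) :=
  {z | ∀ q ∈ NidealLE μ α n, MvPolynomial.eval z q = 0}

/-- `𝒮(μ)`: the Zariski closure of `supp(μ)`, i.e. the common zero set of `𝒩(μ)`. -/
def Szar (μ : Measure (Fin d → ℂ)) : Set (Fin d → ℂ) :=
  {z | ∀ q ∈ Nideal μ, MvPolynomial.eval z q = 0}

/-- `ℒ_n(μ)`: the span of `p_0,…,p_n`. -/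
def Lspan (p : ℕ → MvPolynomial (Fin d) ℂ) (n : ℕ) : Set (MvPolynomial (Fin d) ℂ) :=
  {q | ∃ c : Fin (n + 1) → ℂ, q = ∑ j : Fin (n + 1), c j • p (j : ℕ)}

/-- The `L²(μ)` norm of a polynomial. -/
noncomputable def norm2 (μ : Measure (Fin d → ℂ)) (f : MvPolynomial (Fin d) ℂ) : ℝ :=
  Real.sqrt ((inner2 μ f f).re)

/-- Multivariate cosine function `C_n(z,w)`. -/
noncomputable def coskM (p : ℕ → MvPolynomial (Fin d) ℂ) (n : ℕ) (z w : Fin d → ℂ) : ℂ :=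
  CDkernel p n z w /
    ((Real.sqrt ((CDkernel p n z z).re) * Real.sqrt ((CDkernel p n w w).re) : ℝ) : ℂ)




/-! ### Auxiliary development -/

section Aux

open MvPolynomial

/-- The complement of `msupport μ` is null (second countable space). -/
lemma msupport_compl_null (μ : Measure (Fin d → ℂ)) : μ (msupport μ)ᶜ = 0 := by
  apply measure_null_of_locally_null
  intro x hx
  have hx' : ¬ ∀ U : Set (Fin d → ℂ), x ∈ U → IsOpen U → μ U ≠ 0 := hx
  push_neg at hx'
  obtain ⟨U, hxU, hU, hμU⟩ := hx'
  exact ⟨U, mem_nhdsWithin_of_mem_nhds (hU.mem_nhds hxU), hμU⟩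

lemma ae_mem_msupport (μ : Measure (Fin d → ℂ)) : ∀ᵐ z ∂μ, z ∈ msupport μ := by
  rw [MeasureTheory.ae_iff]
  exact msupport_compl_null μ

lemma nideal_iff_ae (μ : Measure (Fin d → ℂ)) (q : MvPolynomial (Fin d) ℂ) :
    q ∈ Nideal μ ↔ ∀ᵐ z ∂μ, MvPolynomial.eval z q = 0 := by
  constructor
  · intro hq
    filter_upwards [ae_mem_msupport μ] with z hz using hq z hz
  · intro h z hz
    by_contra hne
    have hU : IsOpen ((fun w : Fin d → ℂ => MvPolynomial.eval w q) ⁻¹' {(0:ℂ)}ᶜ) :=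
      isOpen_compl_singleton.preimage (MvPolynomial.continuous_eval q)
    refine hz _ (by exact hne) hU ?_
    exact measure_mono_null (fun w hw => hw) (MeasureTheory.ae_iff.mp h)

lemma integrable_of_continuous {E : Type*} [NormedAddCommGroup E]
    (μ : Measure (Fin d → ℂ)) [IsFiniteMeasure μ] (hμc : IsCompact (msupport μ))
    {f : (Fin d → ℂ) → E} (hf : Continuous f) : Integrable f μ := by
  obtain ⟨C, hC⟩ := hμc.exists_bound_of_continuousOn hf.continuousOn
  refine Integrable.mono' (integrable_const C) hf.aestronglyMeasurable ?_
  filter_upwards [ae_mem_msupport μ] with z hz using hC z hz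

lemma integrable_mul_conj (μ : Measure (Fin d → ℂ)) [IsFiniteMeasure μ]
    (hμc : IsCompact (msupport μ)) (f g : MvPolynomial (Fin d) ℂ) :
    Integrable (fun z => MvPolynomial.eval z f * (starRingEnd ℂ) (MvPolynomial.eval z g)) μ :=
  integrable_of_continuous μ hμc
    ((MvPolynomial.continuous_eval f).mul ((MvPolynomial.continuous_eval g).star))

lemma inner2_sum_left (μ : Measure (Fin d → ℂ)) [IsFiniteMeasure μ]
    (hμc : IsCompact (msupport μ)) {m : ℕ} (c : Fin m → ℂ)
    (f : Fin m → MvPolynomial (Fin d) ℂ) (g : MvPolynomial (Fin d) ℂ) :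
    inner2 μ (∑ j, c j • f j) g = ∑ j, c j * inner2 μ (f j) g := by
  unfold inner2
  have h1 : ∀ z : Fin d → ℂ,
      MvPolynomial.eval z (∑ j, c j • f j) * (starRingEnd ℂ) (MvPolynomial.eval z g)
      = ∑ j, c j * (MvPolynomial.eval z (f j) * (starRingEnd ℂ) (MvPolynomial.eval z g)) := by
    intro z
    rw [map_sum, Finset.sum_mul]
    exact Finset.sum_congr rfl fun j _ => by rw [MvPolynomial.smul_eval]; ring
  simp_rw [h1]
  rw [integral_finset_sum _ (fun j _ => (integrable_mul_conj μ hμc (f j) g).const_mul _)]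
  exact Finset.sum_congr rfl fun j _ => integral_const_mul _ _

lemma inner2_sum_right (μ : Measure (Fin d → ℂ)) [IsFiniteMeasure μ]
    (hμc : IsCompact (msupport μ)) {m : ℕ} (c : Fin m → ℂ)
    (g : Fin m → MvPolynomial (Fin d) ℂ) (f : MvPolynomial (Fin d) ℂ) :
    inner2 μ f (∑ j, c j • g j) = ∑ j, (starRingEnd ℂ) (c j) * inner2 μ f (g j) := by
  unfold inner2
  have h1 : ∀ z : Fin d → ℂ,
      MvPolynomial.eval z f * (starRingEnd ℂ) (MvPolynomial.eval z (∑ j, c j • g j))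
      = ∑ j, (starRingEnd ℂ) (c j) *
          (MvPolynomial.eval z f * (starRingEnd ℂ) (MvPolynomial.eval z (g j))) := by
    intro z
    rw [map_sum, map_sum, Finset.mul_sum]
    exact Finset.sum_congr rfl fun j _ => by rw [MvPolynomial.smul_eval, _root_.map_mul]; ring
  simp_rw [h1]
  rw [integral_finset_sum _ (fun j _ => (integrable_mul_conj μ hμc f (g j)).const_mul _)]
  exact Finset.sum_congr rfl fun j _ => integral_const_mul _ _

lemma inner2_eq_zero_of_nideal (μ : Measure (Fin d → ℂ)) (q g : MvPolynomial (Fin d) ℂ)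
    (hq : q ∈ Nideal μ) : inner2 μ q g = 0 := by
  unfold inner2
  have h : (fun z => MvPolynomial.eval z q * (starRingEnd ℂ) (MvPolynomial.eval z g))
      =ᵐ[μ] (fun _ => (0:ℂ)) := by
    filter_upwards [(nideal_iff_ae μ q).mp hq] with z hz
    rw [hz, zero_mul]
  rw [integral_congr_ae h, integral_zero]

lemma nideal_of_inner2_self (μ : Measure (Fin d → ℂ)) [IsFiniteMeasure μ]
    (hμc : IsCompact (msupport μ)) (q : MvPolynomial (Fin d) ℂ)
    (hq : inner2 μ q q = 0) : q ∈ Nideal μ := by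
  rw [nideal_iff_ae]
  have hint : Integrable (fun z => Complex.normSq (MvPolynomial.eval z q)) μ :=
    integrable_of_continuous μ hμc
      (Complex.continuous_normSq.comp (MvPolynomial.continuous_eval q))
  have h1 : inner2 μ q q = ∫ z, ((Complex.normSq (MvPolynomial.eval z q) : ℝ) : ℂ) ∂μ :=
    integral_congr_ae (Filter.Eventually.of_forall fun z => Complex.mul_conj _)
  rw [h1] at hq
  have key : ∫ z, ((Complex.normSq (MvPolynomial.eval z q) : ℝ) : ℂ) ∂μ
      = ((∫ z, Complex.normSq (MvPolynomial.eval z q) ∂μ : ℝ) : ℂ) := integral_ofReal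
  rw [key] at hq
  have h2 : ∫ z, Complex.normSq (MvPolynomial.eval z q) ∂μ = 0 := by exact_mod_cast hq
  have h3 := (integral_eq_zero_iff_of_nonneg (fun z => Complex.normSq_nonneg _) hint).mp h2
  filter_upwards [h3] with z hz
  exact Complex.normSq_eq_zero.mp hz

/-- The `j`-th monomial of the enumeration. -/
noncomputable def mono (α : ℕ → (Fin d →₀ ℕ)) (j : ℕ) : MvPolynomial (Fin d) ℂ :=
  MvPolynomial.monomial (α j) 1

/-- The polynomial with coefficient vector `c`. -/
noncomputable def polyOf (α : ℕ → (Fin d →₀ ℕ)) {m : ℕ} (c : Fin m → ℂ) :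
    MvPolynomial (Fin d) ℂ :=
  ∑ j, c j • mono α (j : ℕ)

lemma coeff_polyOf {α : ℕ → (Fin d →₀ ℕ)} (hα : Function.Injective α) {m : ℕ}
    (c : Fin m → ℂ) (i : Fin m) :
    MvPolynomial.coeff (α (i : ℕ)) (polyOf α c) = c i := by
  unfold polyOf mono
  rw [MvPolynomial.coeff_sum, Finset.sum_eq_single i]
  · rw [MvPolynomial.coeff_smul, MvPolynomial.coeff_monomial, if_pos rfl]
    simp
  · intro b _ hbi
    rw [MvPolynomial.coeff_smul, MvPolynomial.coeff_monomial, if_neg, smul_zero]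
    exact fun h => hbi (Fin.val_injective (hα h))
  · intro h; exact absurd (Finset.mem_univ i) h

lemma polyOf_injective {α : ℕ → (Fin d →₀ ℕ)} (hα : Function.Injective α) {m : ℕ} :
    Function.Injective (fun c : Fin m → ℂ => polyOf α c) := by
  intro a b h
  funext i
  have h2 := congrArg (MvPolynomial.coeff (α (i:ℕ))) h
  rwa [coeff_polyOf hα, coeff_polyOf hα] at h2

lemma linearIndependent_mono {α : ℕ → (Fin d →₀ ℕ)} (hα : Function.Injective α) (m : ℕ) :
    LinearIndependent ℂ (fun j : Fin m => mono α (j : ℕ)) := by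
  rw [Fintype.linearIndependent_iff]
  intro g hg i
  have h1 : polyOf α g = 0 := hg
  have h2 := congrArg (MvPolynomial.coeff (α (i:ℕ))) h1
  rwa [coeff_polyOf hα, MvPolynomial.coeff_zero] at h2

/-- `Nideal μ` as a submodule. -/
noncomputable def Nsub (μ : Measure (Fin d → ℂ)) : Submodule ℂ (MvPolynomial (Fin d) ℂ) where
  carrier := Nideal μ
  add_mem' := fun {a b} ha hb z hz => by
    rw [map_add, ha z hz, hb z hz, add_zero]
  zero_mem' := fun z _ => by rw [map_zero]
  smul_mem' := fun c x hx z hz => by rw [MvPolynomial.smul_eval, hx z hz, mul_zero]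

lemma mem_Nsub {μ : Measure (Fin d → ℂ)} {q : MvPolynomial (Fin d) ℂ} :
    q ∈ Nsub μ ↔ q ∈ Nideal μ := Iff.rfl

/-- Span of the first `m` monomials. -/
noncomputable def Vsub (α : ℕ → (Fin d →₀ ℕ)) (m : ℕ) : Submodule ℂ (MvPolynomial (Fin d) ℂ) :=
  Submodule.span ℂ (Set.range fun j : Fin m => mono α (j : ℕ))

lemma mem_Vsub_iff {α : ℕ → (Fin d →₀ ℕ)} {m : ℕ} {q : MvPolynomial (Fin d) ℂ} :
    q ∈ Vsub α m ↔ ∃ c : Fin m → ℂ, polyOf α c = q := by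
  rw [Vsub, Submodule.mem_span_range_iff_exists_fun]
  rfl

/-- Intersection of the vanishing ideal with the span of the first `m` monomials. -/
noncomputable def NV (μ : Measure (Fin d → ℂ)) (α : ℕ → (Fin d →₀ ℕ)) (m : ℕ) :
    Submodule ℂ (MvPolynomial (Fin d) ℂ) := Nsub μ ⊓ Vsub α m

lemma fd_Vsub (α : ℕ → (Fin d →₀ ℕ)) (m : ℕ) : FiniteDimensional ℂ (Vsub α m) :=
  FiniteDimensional.span_of_finite ℂ (Set.finite_range _)

lemma fd_NV (μ : Measure (Fin d → ℂ)) (α : ℕ → (Fin d →₀ ℕ)) (m : ℕ) :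
    FiniteDimensional ℂ (NV μ α m) :=
  haveI := fd_Vsub α m
  Submodule.finiteDimensional_of_le (inf_le_right : NV μ α m ≤ Vsub α m)

lemma finrank_Vsub {α : ℕ → (Fin d →₀ ℕ)} (hα : Function.Injective α) (m : ℕ) :
    Module.finrank ℂ (Vsub α m) = m := by
  rw [Vsub, finrank_span_eq_card (linearIndependent_mono hα m), Fintype.card_fin]

/-- `polyOf` as a linear map. -/
noncomputable def phiMap (α : ℕ → (Fin d →₀ ℕ)) (m : ℕ) :
    (Fin m → ℂ) →ₗ[ℂ] MvPolynomial (Fin d) ℂ where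
  toFun := polyOf α
  map_add' a b := by simp [polyOf, add_smul, Finset.sum_add_distrib]
  map_smul' r a := by simp [polyOf, Finset.smul_sum, smul_smul]

end Aux


section Aux2

open MvPolynomial Module

variable {μ : Measure (Fin d → ℂ)} {α : ℕ → (Fin d →₀ ℕ)}

lemma mulVec_momentMatrix [IsFiniteMeasure μ] (hμc : IsCompact (msupport μ))
    (k : ℕ) (c : Fin (k+1) → ℂ) (j : Fin (k+1)) :
    (momentMatrix μ α k).mulVec c j = inner2 μ (polyOf α c) (mono α (j:ℕ)) := by
  have h : polyOf α c = ∑ l : Fin (k+1), c l • mono α (l:ℕ) := rfl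
  rw [h, inner2_sum_left μ hμc]
  simp only [Matrix.mulVec, dotProduct, momentMatrix, Matrix.of_apply]
  exact Finset.sum_congr rfl fun l _ => by rw [mul_comm]; rfl

lemma momentMatrix_mulVec_eq_zero_iff [IsFiniteMeasure μ] (hμc : IsCompact (msupport μ))
    (k : ℕ) (c : Fin (k+1) → ℂ) :
    (momentMatrix μ α k).mulVec c = 0 ↔ polyOf α c ∈ Nideal μ := by
  constructor
  · intro h
    apply nideal_of_inner2_self μ hμc
    have hj : ∀ j : Fin (k+1), inner2 μ (polyOf α c) (mono α (j:ℕ)) = 0 := fun j => by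
      rw [← mulVec_momentMatrix hμc k c j]; exact congrFun h j
    have h2 : inner2 μ (polyOf α c) (polyOf α c)
        = ∑ j : Fin (k+1), (starRingEnd ℂ) (c j) * inner2 μ (polyOf α c) (mono α (j:ℕ)) :=
      inner2_sum_right μ hμc c (fun l => mono α (l:ℕ)) (polyOf α c)
    rw [h2]
    exact Finset.sum_eq_zero fun j _ => by rw [hj j, mul_zero]
  · intro h
    funext j
    rw [mulVec_momentMatrix hμc k c j, inner2_eq_zero_of_nideal μ _ _ h]
    rfl

lemma rank_nullity_moment [IsFiniteMeasure μ] (hμc : IsCompact (msupport μ))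
    (hα : Function.Injective α) (k : ℕ) :
    (momentMatrix μ α k).rank + finrank ℂ (NV μ α (k+1)) = k + 1 := by
  classical
  have hker : Submodule.map (phiMap α (k+1)) (LinearMap.ker (momentMatrix μ α k).mulVecLin)
      = NV μ α (k+1) := by
    ext q
    simp only [Submodule.mem_map, LinearMap.mem_ker, Matrix.mulVecLin_apply]
    constructor
    · rintro ⟨c, hc, rfl⟩
      exact ⟨(momentMatrix_mulVec_eq_zero_iff hμc k c).mp hc,
        mem_Vsub_iff.mpr ⟨c, rfl⟩⟩
    · rintro ⟨hN, hV⟩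
      obtain ⟨c, rfl⟩ := mem_Vsub_iff.mp hV
      exact ⟨c, (momentMatrix_mulVec_eq_zero_iff hμc k c).mpr hN, rfl⟩
  have hphi : Function.Injective (phiMap α (k+1) : (Fin (k+1) → ℂ) →ₗ[ℂ] _) :=
    fun a b h => polyOf_injective hα h
  have h2 : finrank ℂ (NV μ α (k+1))
      = finrank ℂ (LinearMap.ker (momentMatrix μ α k).mulVecLin) := by
    rw [← hker]
    exact (Submodule.equivMapOfInjective _ hphi _).symm.finrank_eq
  have h3 := LinearMap.finrank_range_add_finrank_ker (momentMatrix μ α k).mulVecLin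
  rw [Module.finrank_fin_fun ℂ] at h3
  have h1 : (momentMatrix μ α k).rank
      = finrank ℂ (LinearMap.range (momentMatrix μ α k).mulVecLin) := rfl
  omega

lemma Vsub_mono (m : ℕ) : Vsub α m ≤ Vsub α (m+1) := by
  apply Submodule.span_mono
  rintro x ⟨j, rfl⟩
  exact ⟨j.castSucc, by simp⟩

lemma finrank_NV_mono (μ : Measure (Fin d → ℂ)) (α : ℕ → (Fin d →₀ ℕ)) (m : ℕ) :
    finrank ℂ (NV μ α m) ≤ finrank ℂ (NV μ α (m+1)) :=
  haveI := fd_NV μ α (m+1)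
  Submodule.finrank_mono (inf_le_inf le_rfl (Vsub_mono m))

lemma finrank_NV_succ_le (hα : Function.Injective α) (m : ℕ) :
    finrank ℂ (NV μ α (m+1)) ≤ finrank ℂ (NV μ α m) + 1 := by
  classical
  haveI := fd_NV μ α (m+1)
  haveI := fd_NV μ α m
  set ψ : NV μ α (m+1) →ₗ[ℂ] ℂ :=
    (MvPolynomial.lcoeff ℂ (α m)).comp (NV μ α (m+1)).subtype with hψ
  have hsub : ∀ x : LinearMap.ker ψ, ((x : NV μ α (m+1)) : MvPolynomial (Fin d) ℂ) ∈ NV μ α m := by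
    rintro ⟨⟨q, hqmem⟩, hqker⟩
    refine Submodule.mem_inf.mpr ⟨(Submodule.mem_inf.mp hqmem).1, ?_⟩
    obtain ⟨c, rfl⟩ := mem_Vsub_iff.mp (Submodule.mem_inf.mp hqmem).2
    have hlast : c (Fin.last m) = 0 := by
      have h := coeff_polyOf hα c (Fin.last m)
      rw [Fin.val_last] at h
      rw [← h]
      exact hqker
    rw [mem_Vsub_iff]
    refine ⟨fun j => c j.castSucc, ?_⟩
    show (∑ j : Fin m, c j.castSucc • mono α (j:ℕ)) = ∑ i : Fin (m+1), c i • mono α (i:ℕ)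
    rw [Fin.sum_univ_castSucc, hlast, zero_smul, add_zero]
    exact Finset.sum_congr rfl fun j _ => by rw [Fin.coe_castSucc]
  set ι : LinearMap.ker ψ →ₗ[ℂ] NV μ α m :=
    LinearMap.codRestrict (NV μ α m)
      ((NV μ α (m+1)).subtype.comp (LinearMap.ker ψ).subtype) hsub with hι
  have hinj : Function.Injective ι := by
    intro a b h
    have h2 := congrArg (Subtype.val) h
    exact Subtype.ext (Subtype.ext h2)
  have h1 := LinearMap.finrank_range_add_finrank_ker ψ
  have h2 : finrank ℂ (LinearMap.range ψ) ≤ 1 := by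
    have := Submodule.finrank_le (LinearMap.range ψ)
    rwa [Module.finrank_self] at this
  have h3 : finrank ℂ (LinearMap.ker ψ) ≤ finrank ℂ (NV μ α m) :=
    LinearMap.finrank_le_finrank_of_injective hinj
  omega

lemma rank_moment_zero [IsFiniteMeasure μ] (hμ0 : μ ≠ 0) (hμc : IsCompact (msupport μ))
    (hα : AdmissibleEnum α) : (momentMatrix μ α 0).rank = 1 := by
  have h := rank_nullity_moment (μ := μ) hμc hα.1.injective 0
  have hne : (msupport μ).Nonempty := by
    rw [Set.nonempty_iff_ne_empty]
    intro he
    apply hμ0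
    have h0 := msupport_compl_null μ
    rw [he, Set.compl_empty] at h0
    exact Measure.measure_univ_eq_zero.mp h0
  obtain ⟨z₀, hz₀⟩ := hne
  have hbot : NV μ α 1 = ⊥ := by
    rw [eq_bot_iff]
    rintro q ⟨hqN, hqV⟩
    obtain ⟨c, rfl⟩ := mem_Vsub_iff.mp hqV
    have heval : MvPolynomial.eval z₀ (polyOf α c) = c 0 := by
      show MvPolynomial.eval z₀ (∑ j : Fin 1, c j • mono α (j:ℕ)) = c 0
      rw [Finset.univ_unique, Finset.sum_singleton]
      show MvPolynomial.eval z₀ (c default • mono α ((default : Fin 1) : ℕ)) = c 0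
      rw [MvPolynomial.smul_eval]
      have : ((default : Fin 1) : ℕ) = 0 := rfl
      rw [this, mono, hα.2.1, MvPolynomial.monomial_zero', MvPolynomial.eval_C, mul_one]
      rfl
    have hc0 : c 0 = 0 := by rw [← heval]; exact hqN z₀ hz₀
    have hc : c = 0 := funext fun j => by rw [Subsingleton.elim j 0, hc0]; rfl
    rw [Submodule.mem_bot]
    show polyOf α c = 0
    rw [hc]
    show (∑ j : Fin 1, (0:ℂ) • mono α (j:ℕ)) = 0
    simp
  rw [hbot] at h
  rw [finrank_bot] at h
  omega

lemma rank_moment_mono_step [IsFiniteMeasure μ] (hμc : IsCompact (msupport μ))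
    (hα : Function.Injective α) (k : ℕ) :
    (momentMatrix μ α k).rank ≤ (momentMatrix μ α (k+1)).rank ∧
      (momentMatrix μ α (k+1)).rank ≤ (momentMatrix μ α k).rank + 1 := by
  have h1 := rank_nullity_moment (μ := μ) hμc hα k
  have h2 := rank_nullity_moment (μ := μ) hμc hα (k+1)
  have h3 := finrank_NV_mono μ α (k+1)
  have h4 := finrank_NV_succ_le (μ := μ) hα (k+1)
  omega

lemma rank_moment_pos [IsFiniteMeasure μ] (hμ0 : μ ≠ 0) (hμc : IsCompact (msupport μ))
    (hα : AdmissibleEnum α) (k : ℕ) : 1 ≤ (momentMatrix μ α k).rank := by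
  induction k with
  | zero => rw [rank_moment_zero hμ0 hμc hα]
  | succ k ih => exact le_trans ih (rank_moment_mono_step hμc hα.1.injective k).1

lemma kdeg_le_of_rank [IsFiniteMeasure μ] (hμ0 : μ ≠ 0) (hμc : IsCompact (msupport μ))
    (hα : AdmissibleEnum α) :
    ∀ k j, j + 1 ≤ (momentMatrix μ α k).rank → kdeg μ α j ≤ k := by
  intro k
  induction k with
  | zero =>
    intro j hj
    rw [rank_moment_zero hμ0 hμc hα] at hj
    have hj0 : j = 0 := by omega
    subst hj0
    exact Nat.sInf_le (rank_moment_zero hμ0 hμc hα)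
  | succ k ih =>
    intro j hj
    by_cases h : j + 1 ≤ (momentMatrix μ α k).rank
    · exact le_trans (ih j h) (Nat.le_succ k)
    · have hstep := rank_moment_mono_step (μ := μ) hμc hα.1.injective k
      have : (momentMatrix μ α (k+1)).rank = j + 1 := by omega
      exact Nat.sInf_le this

end Aux2


section Aux3

open MvPolynomial Module

variable {μ : Measure (Fin d → ℂ)} {α : ℕ → (Fin d →₀ ℕ)}

/-- Span of `p_0, …, p_n` as a submodule. -/
noncomputable def Wsub (p : ℕ → MvPolynomial (Fin d) ℂ) (n : ℕ) :
    Submodule ℂ (MvPolynomial (Fin d) ℂ) :=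
  Submodule.span ℂ (Set.range fun j : Fin (n+1) => p (j : ℕ))

lemma Wsub_mono (p : ℕ → MvPolynomial (Fin d) ℂ) {a b : ℕ} (hab : a ≤ b) :
    Wsub p a ≤ Wsub p b := by
  apply Submodule.span_mono
  rintro x ⟨j, rfl⟩
  exact ⟨⟨(j:ℕ), by omega⟩, rfl⟩

lemma crux [IsFiniteMeasure μ] (hμ0 : μ ≠ 0) (hμc : IsCompact (msupport μ))
    (hα : AdmissibleEnum α) {p : ℕ → MvPolynomial (Fin d) ℂ} (hp : IsONBasis μ α p)
    (t : ℕ) : mono α t ∈ (⨆ n, Wsub p n) ⊔ Nsub μ := by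
  classical
  haveI := fd_Vsub α (t+1)
  haveI := fd_NV μ α (t+1)
  obtain ⟨n, hn⟩ : ∃ n, (momentMatrix μ α t).rank = n + 1 :=
    ⟨(momentMatrix μ α t).rank - 1, by have := rank_moment_pos hμ0 hμc hα t; omega⟩
  have hpj_mem : ∀ j : ℕ, j ≤ n → p j ∈ Vsub α (t+1) := by
    intro j hj
    obtain ⟨c, _, _, hpc⟩ := (hp n).2 j hj
    rw [hpc]
    apply Submodule.sum_mem
    intro i _
    have hk : kdeg μ α (i:ℕ) ≤ t := by
      apply kdeg_le_of_rank hμ0 hμc hα t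
      have := i.isLt
      omega
    have hmono : (MvPolynomial.monomial (α (kdeg μ α (i:ℕ)))) (c i)
        = c i • mono α (kdeg μ α (i:ℕ)) := by
      rw [mono, MvPolynomial.smul_monomial, smul_eq_mul, mul_one]
    rw [hmono]
    apply Submodule.smul_mem
    apply Submodule.subset_span
    exact ⟨⟨kdeg μ α (i:ℕ), by omega⟩, rfl⟩
  have hON := (hp n).1
  have hIP : ∀ (g : Fin (n+1) → ℂ) (i : Fin (n+1)),
      inner2 μ (∑ j : Fin (n+1), g j • p (j:ℕ)) (p (i:ℕ)) = g i := by
    intro g i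
    rw [inner2_sum_left μ hμc]
    rw [Finset.sum_eq_single i]
    · rw [hON (i:ℕ) (Nat.lt_succ_iff.mp i.isLt) (i:ℕ) (Nat.lt_succ_iff.mp i.isLt),
        if_pos rfl, mul_one]
    · intro b _ hbi
      rw [hON (b:ℕ) (Nat.lt_succ_iff.mp b.isLt) (i:ℕ) (Nat.lt_succ_iff.mp i.isLt),
        if_neg (fun h => hbi (Fin.val_injective h)), mul_zero]
    · intro h; exact absurd (Finset.mem_univ i) h
  have hWli : LinearIndependent ℂ (fun j : Fin (n+1) => p (j:ℕ)) := by
    rw [Fintype.linearIndependent_iff]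
    intro g hg i
    have h1 := hIP g i
    rw [hg] at h1
    rw [← h1]
    simp [inner2]
  haveI : FiniteDimensional ℂ (Wsub p n) :=
    FiniteDimensional.span_of_finite ℂ (Set.finite_range _)
  have hWrank : finrank ℂ (Wsub p n) = n + 1 := by
    rw [Wsub, finrank_span_eq_card hWli, Fintype.card_fin]
  have hdisj : Wsub p n ⊓ NV μ α (t+1) = ⊥ := by
    rw [eq_bot_iff]
    intro x hx
    have hxW : x ∈ Wsub p n := hx.1
    have hxN : x ∈ Nsub μ := hx.2.1
    obtain ⟨g, rfl⟩ := Submodule.mem_span_range_iff_exists_fun ℂ |>.mp hxW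
    have hg : ∀ i : Fin (n+1), g i = 0 := by
      intro i
      rw [← hIP g i]
      exact inner2_eq_zero_of_nideal μ _ _ hxN
    rw [Submodule.mem_bot]
    exact Finset.sum_eq_zero fun j _ => by rw [hg j, zero_smul]
  have hsum := Submodule.finrank_sup_add_finrank_inf_eq (Wsub p n) (NV μ α (t+1))
  rw [hdisj, finrank_bot, add_zero] at hsum
  have hnull := rank_nullity_moment (μ := μ) hμc hα.1.injective t
  have hle : Wsub p n ⊔ NV μ α (t+1) ≤ Vsub α (t+1) := by
    apply sup_le _ inf_le_right
    rw [Wsub, Submodule.span_le]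
    rintro x ⟨j, rfl⟩
    exact hpj_mem (j:ℕ) (Nat.lt_succ_iff.mp j.isLt)
  have hVrank : finrank ℂ (Vsub α (t+1)) = t + 1 := finrank_Vsub hα.1.injective (t+1)
  haveI : FiniteDimensional ℂ (Wsub p n ⊔ NV μ α (t+1) : Submodule ℂ (MvPolynomial (Fin d) ℂ)) :=
    Submodule.finiteDimensional_of_le hle
  have heq : Wsub p n ⊔ NV μ α (t+1) = Vsub α (t+1) := by
    apply Submodule.eq_of_le_of_finrank_le hle
    omega
  have hmem : mono α t ∈ Vsub α (t+1) :=
    Submodule.subset_span ⟨⟨t, Nat.lt_succ_self t⟩, rfl⟩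
  rw [← heq] at hmem
  exact sup_le_sup (le_iSup (Wsub p) n) inf_le_left hmem

lemma represent [IsFiniteMeasure μ] (hμ0 : μ ≠ 0) (hμc : IsCompact (msupport μ))
    (hα : AdmissibleEnum α) {p : ℕ → MvPolynomial (Fin d) ℂ} (hp : IsONBasis μ α p)
    (q : MvPolynomial (Fin d) ℂ) :
    ∃ n, ∃ a : Fin (n+1) → ℂ, ∀ z ∈ Szar μ,
      MvPolynomial.eval z q = ∑ j : Fin (n+1), a j * MvPolynomial.eval z (p (j:ℕ)) := by
  have hq : q ∈ (⨆ n, Wsub p n) ⊔ Nsub μ := by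
    have hspan : ∀ v : Fin d →₀ ℕ, ∀ r : ℂ,
        (MvPolynomial.monomial v) r ∈ (⨆ n, Wsub p n) ⊔ Nsub μ := by
      intro v r
      obtain ⟨s, rfl⟩ := hα.1.surjective v
      have h : (MvPolynomial.monomial (α s)) r = r • mono α s := by
        rw [mono, MvPolynomial.smul_monomial, smul_eq_mul, mul_one]
      rw [h]
      exact Submodule.smul_mem _ r (crux hμ0 hμc hα hp s)
    rw [← MvPolynomial.support_sum_monomial_coeff q]
    exact Submodule.sum_mem _ fun v _ => hspan v _
  obtain ⟨y, hy, w, hw, rfl⟩ := Submodule.mem_sup.mp hq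
  have hdir : Directed (· ≤ ·) (Wsub p) := fun a b =>
    ⟨max a b, Wsub_mono p (le_max_left a b), Wsub_mono p (le_max_right a b)⟩
  obtain ⟨n, hyn⟩ := (Submodule.mem_iSup_of_directed _ hdir).mp hy
  obtain ⟨a, rfl⟩ := Submodule.mem_span_range_iff_exists_fun ℂ |>.mp hyn
  refine ⟨n, a, fun z hz => ?_⟩
  rw [map_add]
  have hw0 : MvPolynomial.eval z w = 0 := hz w hw
  rw [hw0, add_zero, map_sum]
  exact Finset.sum_congr rfl fun j _ => by rw [MvPolynomial.smul_eval]

lemma lagrange {ℓ : ℕ} (zs : Fin ℓ → (Fin d → ℂ)) (hinj : Function.Injective zs) (j₀ : Fin ℓ) :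
    ∃ q : MvPolynomial (Fin d) ℂ,
      ∀ i, MvPolynomial.eval (zs i) q = if i = j₀ then 1 else 0 := by
  classical
  have hex : ∀ i : Fin ℓ, i ≠ j₀ → ∃ r : Fin d, zs i r ≠ zs j₀ r := by
    intro i hi
    by_contra h
    push_neg at h
    exact hi (hinj (funext h))
  choose rr hrr using hex
  set g : MvPolynomial (Fin d) ℂ := ∏ i ∈ Finset.univ.erase j₀,
      if h : i = j₀ then 1
      else (MvPolynomial.X (rr i h) - MvPolynomial.C (zs i (rr i h))) with hgdef
  have hg : ∀ w : Fin d → ℂ, MvPolynomial.eval w g = ∏ i ∈ Finset.univ.erase j₀,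
      MvPolynomial.eval w (if h : i = j₀ then 1
        else (MvPolynomial.X (rr i h) - MvPolynomial.C (zs i (rr i h)))) := by
    intro w
    rw [hgdef, map_prod]
  have hg_eval : ∀ i, i ≠ j₀ → MvPolynomial.eval (zs i) g = 0 := by
    intro i hi
    rw [hg]
    apply Finset.prod_eq_zero (Finset.mem_erase.mpr ⟨hi, Finset.mem_univ i⟩)
    rw [dif_neg hi]
    simp
  have hg0 : MvPolynomial.eval (zs j₀) g ≠ 0 := by
    rw [hg]
    apply Finset.prod_ne_zero_iff.mpr
    intro i hi
    rw [dif_neg (Finset.mem_erase.mp hi).1]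
    simp only [map_sub, MvPolynomial.eval_X, MvPolynomial.eval_C]
    exact sub_ne_zero_of_ne (hrr i (Finset.mem_erase.mp hi).1).symm
  refine ⟨MvPolynomial.C (MvPolynomial.eval (zs j₀) g)⁻¹ * g, fun i => ?_⟩
  rw [_root_.map_mul, MvPolynomial.eval_C]
  by_cases hi : i = j₀
  · subst hi
    rw [if_pos rfl, inv_mul_cancel₀ hg0]
  · rw [if_neg hi, hg_eval i hi, mul_zero]

end Aux3

/-- Invertibility of the multipoint Christoffel–Darboux kernel matrix at distinct
points of the Zariski closure of the support, for all large `n`. -/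
theorem statement10 (μ : Measure (Fin d → ℂ)) [IsFiniteMeasure μ]
    (hμ0 : μ ≠ 0) (hμc : IsCompact (msupport μ))
    (α : ℕ → (Fin d →₀ ℕ)) (hα : AdmissibleEnum α)
    (hrank : ∀ m : ℕ, ∃ k : ℕ, m + 1 ≤ (momentMatrix μ α k).rank)
    (p : ℕ → MvPolynomial (Fin d) ℂ) (hp : IsONBasis μ α p)
    (ℓ : ℕ) (zs : Fin ℓ → (Fin d → ℂ)) (hinj : Function.Injective zs)
    (hzS : ∀ j, zs j ∈ Szar μ) :
    ∃ N : ℕ, ∀ n ≥ N,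
      IsUnit (Matrix.of fun j k : Fin ℓ => CDkernel p n (zs j) (zs k)) := by
  classical
  choose qd hqd using fun j₀ => lagrange zs hinj j₀
  choose nn aa haa using fun j₀ : Fin ℓ => represent hμ0 hμc hα hp (qd j₀)
  refine ⟨Finset.univ.sup nn, fun n hn => ?_⟩
  rw [Matrix.isUnit_iff_isUnit_det, isUnit_iff_ne_zero]
  intro hdet
  obtain ⟨c, hc0, hcv⟩ := (Matrix.exists_mulVec_eq_zero_iff).mpr hdet
  set A : ℕ → Fin ℓ → ℂ := fun m i => MvPolynomial.eval (zs i) (p m) with hA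
  set w : ℕ → ℂ := fun m => ∑ k, (starRingEnd ℂ) (A m k) * c k with hwdef
  have hMc : ∀ j : Fin ℓ,
      (Matrix.of fun j k : Fin ℓ => CDkernel p n (zs j) (zs k)).mulVec c j
      = ∑ m ∈ Finset.range (n+1), A m j * w m := by
    intro j
    simp only [Matrix.mulVec, dotProduct, Matrix.of_apply, CDkernel, Finset.sum_mul]
    rw [Finset.sum_comm]
    refine Finset.sum_congr rfl fun m _ => ?_
    rw [hwdef, Finset.mul_sum]
    exact Finset.sum_congr rfl fun k _ => by rw [hA]; ring
  have hL0 : ∑ j, (starRingEnd ℂ) (c j) *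
        ((Matrix.of fun j k : Fin ℓ => CDkernel p n (zs j) (zs k)).mulVec c j)
      = ∑ m ∈ Finset.range (n+1), (starRingEnd ℂ) (w m) * w m := by
    simp_rw [hMc, Finset.mul_sum]
    rw [Finset.sum_comm]
    refine Finset.sum_congr rfl fun m _ => ?_
    have hconj : (starRingEnd ℂ) (w m) = ∑ j, (starRingEnd ℂ) (c j) * A m j := by
      rw [hwdef]
      rw [map_sum]
      exact Finset.sum_congr rfl fun j _ => by
        rw [_root_.map_mul, Complex.conj_conj, mul_comm]
    rw [hconj, Finset.sum_mul]
    exact Finset.sum_congr rfl fun j _ => by ring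
  have hzero : ∑ j, (starRingEnd ℂ) (c j) *
      ((Matrix.of fun j k : Fin ℓ => CDkernel p n (zs j) (zs k)).mulVec c j) = 0 := by
    rw [hcv]
    simp
  have hsumSq : ∑ m ∈ Finset.range (n+1), ((Complex.normSq (w m) : ℝ) : ℂ) = 0 := by
    rw [show (∑ m ∈ Finset.range (n+1), ((Complex.normSq (w m) : ℝ) : ℂ))
        = ∑ m ∈ Finset.range (n+1), (starRingEnd ℂ) (w m) * w m from
      Finset.sum_congr rfl fun m _ => by rw [mul_comm, Complex.mul_conj]]
    rw [← hL0]
    exact hzero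
  have hsumSqR : ∑ m ∈ Finset.range (n+1), Complex.normSq (w m) = 0 := by
    have : ((∑ m ∈ Finset.range (n+1), Complex.normSq (w m) : ℝ) : ℂ) = 0 := by
      push_cast
      exact hsumSq
    exact_mod_cast this
  have hw0 : ∀ m ∈ Finset.range (n+1), w m = 0 := by
    intro m hm
    have h := (Finset.sum_eq_zero_iff_of_nonneg
      (fun m _ => Complex.normSq_nonneg (w m))).mp hsumSqR m hm
    exact Complex.normSq_eq_zero.mp h
  apply hc0
  funext k₀
  show c k₀ = 0
  have h2 : ∑ i, (starRingEnd ℂ) (MvPolynomial.eval (zs i) (qd k₀)) * c i = c k₀ := by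
    have : ∀ i, (starRingEnd ℂ) (MvPolynomial.eval (zs i) (qd k₀)) * c i
        = if i = k₀ then c i else 0 := by
      intro i
      rw [hqd k₀ i]
      by_cases hi : i = k₀
      · rw [if_pos hi, if_pos hi, _root_.map_one, one_mul]
      · rw [if_neg hi, if_neg hi, _root_.map_zero, zero_mul]
    simp_rw [this]
    rw [Finset.sum_ite_eq' Finset.univ k₀ (fun i => c i)]
    rw [if_pos (Finset.mem_univ k₀)]
  have h3 : ∑ i, (starRingEnd ℂ) (MvPolynomial.eval (zs i) (qd k₀)) * c i
      = ∑ j : Fin (nn k₀ + 1), (starRingEnd ℂ) (aa k₀ j) * w (j:ℕ) := by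
    have hrw : ∀ i, (starRingEnd ℂ) (MvPolynomial.eval (zs i) (qd k₀)) * c i
        = ∑ j : Fin (nn k₀ + 1), (starRingEnd ℂ) (aa k₀ j) *
            ((starRingEnd ℂ) (A (j:ℕ) i) * c i) := by
      intro i
      rw [haa k₀ (zs i) (hzS i), map_sum, Finset.sum_mul]
      exact Finset.sum_congr rfl fun j _ => by rw [_root_.map_mul, hA]; ring
    simp_rw [hrw]
    rw [Finset.sum_comm]
    refine Finset.sum_congr rfl fun j _ => ?_
    rw [← Finset.mul_sum, hwdef]
  have h4 : ∀ j : Fin (nn k₀ + 1), w (j:ℕ) = 0 := by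
    intro j
    apply hw0
    rw [Finset.mem_range]
    have hle : nn k₀ ≤ n := le_trans (Finset.le_sup (Finset.mem_univ k₀)) hn
    have := j.isLt
    omega
  calc c k₀ = ∑ j : Fin (nn k₀ + 1), (starRingEnd ℂ) (aa k₀ j) * w (j:ℕ) := h2.symm.trans h3
    _ = 0 := Finset.sum_eq_zero fun j _ => by rw [h4 j, mul_zero]

end CD
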